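/- arXiv:math/0202264 — 2 statements merged into one kernel-verified Lean document; each statement's English description precedes it below -/
import Mathlib

section
/- Let T > 0 and ε > 0. Let x, ξ : [0, T] → ℝ be differentiable functions such that x(t) > 0 for all t ∈ [0, T], ξ(0) ≥ −ε, and for all t ∈ [0, T] one has x′(t) = ξ(t)/x(t) and ξ′(t) ≥ 1/2. Then for all t ∈ [0, T], x(t)² ≥ x(0)² + t²/2 − 2εt; in particular x(t)² ≥ t²/2 − 2εt. -/
lemma mono_aux_conic {a b : ℝ} (f f' : ℝ → ℝ)
    (hf : ∀ t ∈ Set.Icc a b, HasDerivWithinAt f (f' t) (Set.Icc a b) t)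
    (hf' : ∀ t ∈ Set.Icc a b, 0 ≤ f' t) :
    MonotoneOn f (Set.Icc a b) := by
  apply monotoneOn_of_deriv_nonneg (convex_Icc a b)
    (fun t ht => (hf t ht).continuousWithinAt)
  · intro t ht
    rw [interior_Icc] at ht
    exact (((hf t (Set.Ioo_subset_Icc_self ht)).hasDerivAt
      (Icc_mem_nhds ht.1 ht.2)).differentiableAt).differentiableWithinAt
  · intro t ht
    rw [interior_Icc] at ht
    rw [((hf t (Set.Ioo_subset_Icc_self ht)).hasDerivAt (Icc_mem_nhds ht.1 ht.2)).deriv]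
    exact hf' t (Set.Ioo_subset_Icc_self ht)

/-- Quantitative ODE estimate: if `x, ξ` are differentiable on `[0, T]` with
`x > 0`, `ξ 0 ≥ -ε`, `x' = ξ / x` and `ξ' ≥ 1/2` on `[0, T]`, then
`x t ^ 2 ≥ x 0 ^ 2 + t ^ 2 / 2 - 2 ε t`, and in particular
`x t ^ 2 ≥ t ^ 2 / 2 - 2 ε t`, for all `t ∈ [0, T]`. -/
theorem conic_escape_estimate
    (T ε : ℝ) (hT : 0 < T) (hε : 0 < ε)
    (x ξ ξ' : ℝ → ℝ)
    (hxpos : ∀ t ∈ Set.Icc (0 : ℝ) T, 0 < x t)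
    (hξ0 : ξ 0 ≥ -ε)
    (hx' : ∀ t ∈ Set.Icc (0 : ℝ) T,
      HasDerivWithinAt x (ξ t / x t) (Set.Icc (0 : ℝ) T) t)
    (hξ' : ∀ t ∈ Set.Icc (0 : ℝ) T,
      HasDerivWithinAt ξ (ξ' t) (Set.Icc (0 : ℝ) T) t)
    (hξ'ge : ∀ t ∈ Set.Icc (0 : ℝ) T, ξ' t ≥ 1 / 2) :
    ∀ t ∈ Set.Icc (0 : ℝ) T,
      x t ^ 2 ≥ x 0 ^ 2 + t ^ 2 / 2 - 2 * ε * t ∧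
      x t ^ 2 ≥ t ^ 2 / 2 - 2 * ε * t := by
  have h0 : (0 : ℝ) ∈ Set.Icc (0 : ℝ) T := ⟨le_rfl, hT.le⟩
  -- Step 1: ξ t ≥ t/2 - ε
  have hξlb : ∀ t ∈ Set.Icc (0 : ℝ) T, ξ t ≥ t / 2 - ε := by
    have hmono : MonotoneOn (fun t => ξ t - t / 2) (Set.Icc 0 T) := by
      apply mono_aux_conic (fun t => ξ t - t / 2) (fun t => ξ' t - 1 / 2)
      · intro t ht
        exact (hξ' t ht).sub (((hasDerivAt_id t).div_const 2).hasDerivWithinAt)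
      · intro t ht
        linarith [hξ'ge t ht]
    intro t ht
    have := hmono h0 ht ht.1
    simp only at this
    linarith
  -- Step 2: monotonicity of x t ^ 2 - (t^2/2 - 2 ε t)
  have hmono2 : MonotoneOn (fun t => x t ^ 2 - (t ^ 2 / 2 - 2 * ε * t)) (Set.Icc 0 T) := by
    apply mono_aux_conic _ (fun t => 2 * ξ t - (t - 2 * ε))
    · intro t ht
      have hx := (hx' t ht).pow 2
      have hxe : (2 : ℕ) * x t ^ (2 - 1) * (ξ t / x t) = 2 * ξ t := by
        have := (hxpos t ht).ne'
        field_simp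
        ring
      rw [hxe] at hx
      have hq : HasDerivWithinAt (fun t : ℝ => t ^ 2 / 2 - 2 * ε * t) (t - 2 * ε)
          (Set.Icc 0 T) t := by
        have h1 : HasDerivAt (fun t : ℝ => t ^ 2 / 2 - 2 * ε * t) (t - 2 * ε) t := by
          have := ((hasDerivAt_pow 2 t).div_const 2).sub
            ((hasDerivAt_id t).const_mul (2 * ε))
          refine this.congr_deriv ?_
          ring
        exact h1.hasDerivWithinAt
      exact hx.sub hq
    · intro t ht
      have := hξlb t ht
      linarith
  intro t ht
  have key := hmono2 h0 ht ht.1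
  simp only at key
  have hx0 : 0 < x 0 := hxpos 0 h0
  constructor <;> nlinarith [sq_nonneg (x 0)]
end

section
/- Let t̄ > 0 and 0 < ε ≤ t̄/20, and let T ≥ t̄/2. Let x, ξ : [0, T] → ℝ be differentiable functions such that x(t) > 0 for all t ∈ [0, T], ξ(0) ≥ −ε, and for all t ∈ [0, T] one has x′(t) = ξ(t)/x(t) and ξ′(t) ≥ 1/2. Then x(t) > ε for all t ∈ [t̄/4, t̄/2]. -/
/-- If `0 < ε ≤ t̄/20`, `T ≥ t̄/2`, and `x, ξ` are differentiable on `[0, T]`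
with `x > 0`, `ξ 0 ≥ -ε`, `x' = ξ / x`, `ξ' ≥ 1/2` on `[0, T]`, then
`x t > ε` for all `t ∈ [t̄/4, t̄/2]`. -/
theorem conic_no_return
    (tbar ε T : ℝ) (htbar : 0 < tbar) (hε : 0 < ε) (hεle : ε ≤ tbar / 20)
    (hT : T ≥ tbar / 2)
    (x ξ ξ' : ℝ → ℝ)
    (hxpos : ∀ t ∈ Set.Icc (0 : ℝ) T, 0 < x t)
    (hξ0 : ξ 0 ≥ -ε)
    (hx' : ∀ t ∈ Set.Icc (0 : ℝ) T,
      HasDerivWithinAt x (ξ t / x t) (Set.Icc (0 : ℝ) T) t)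
    (hξ' : ∀ t ∈ Set.Icc (0 : ℝ) T,
      HasDerivWithinAt ξ (ξ' t) (Set.Icc (0 : ℝ) T) t)
    (hξ'ge : ∀ t ∈ Set.Icc (0 : ℝ) T, ξ' t ≥ 1 / 2) :
    ∀ t ∈ Set.Icc (tbar / 4) (tbar / 2), x t > ε := by
  have hT0 : (0 : ℝ) < T := lt_of_lt_of_le (by linarith) hT
  have hint : interior (Set.Icc (0 : ℝ) T) = Set.Ioo 0 T := interior_Icc
  have hIoo : Set.Ioo (0 : ℝ) T ⊆ Set.Icc 0 T := Set.Ioo_subset_Icc_self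
  -- Step 1: g t = ξ t - t/2 is monotone on Icc 0 T
  have hg : MonotoneOn (fun t => ξ t - t / 2) (Set.Icc (0 : ℝ) T) := by
    apply monotoneOn_of_hasDerivWithinAt_nonneg (convex_Icc 0 T)
      (f' := fun t => ξ' t - 1 / 2)
    · exact fun t ht => ((hξ' t ht).sub ((hasDerivWithinAt_id t _).div_const 2)).continuousWithinAt
    · intro t ht
      rw [hint] at ht
      exact (((hξ' t (hIoo ht)).sub ((hasDerivWithinAt_id t _).div_const 2)).mono hIoo).mono
        (by rw [hint])
    · intro t ht
      rw [hint] at ht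
      have := hξ'ge t (hIoo ht)
      linarith
  have hξlb : ∀ t ∈ Set.Icc (0 : ℝ) T, ξ t ≥ -ε + t / 2 := by
    intro t ht
    have h0 : (0 : ℝ) ∈ Set.Icc (0 : ℝ) T := ⟨le_refl _, le_of_lt hT0⟩
    have := hg h0 ht ht.1
    simp only at this
    linarith
  -- Step 2: f t = x t ^ 2 - (t^2/2 - 2εt) is monotone on Icc 0 T
  have hf : MonotoneOn (fun t => x t ^ 2 - (t ^ 2 / 2 - 2 * ε * t)) (Set.Icc (0 : ℝ) T) := by
    apply monotoneOn_of_hasDerivWithinAt_nonneg (convex_Icc 0 T)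
      (f' := fun t => 2 * ξ t - (t - 2 * ε))
    · intro t ht
      have hd : HasDerivWithinAt (fun t => x t ^ 2 - (t ^ 2 / 2 - 2 * ε * t))
          (2 * x t ^ (2-1) * (ξ t / x t) - (t - 2 * ε)) (Set.Icc (0 : ℝ) T) t := by
        apply HasDerivWithinAt.sub ((hx' t ht).pow 2)
        have : HasDerivWithinAt (fun t : ℝ => t ^ 2 / 2 - 2 * ε * t)
            (2 * t ^ (2-1) / 2 - 2 * ε) (Set.Icc (0 : ℝ) T) t := by
          simpa using (((hasDerivWithinAt_id t (Set.Icc (0:ℝ) T)).pow 2).div_const 2).fun_sub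
            ((hasDerivWithinAt_id t (Set.Icc (0:ℝ) T)).const_mul (2 * ε))
        simpa using this
      exact hd.continuousWithinAt
    · intro t ht
      rw [hint] at ht
      have ht' := hIoo ht
      have hxne : x t ≠ 0 := ne_of_gt (hxpos t ht')
      have hd : HasDerivWithinAt (fun t => x t ^ 2 - (t ^ 2 / 2 - 2 * ε * t))
          (2 * x t ^ (2-1) * (ξ t / x t) - (2 * t ^ (2-1) / 2 - 2 * ε))
          (Set.Icc (0 : ℝ) T) t := by
        apply ((hx' t ht').pow 2).sub
        simpa using (((hasDerivWithinAt_id t (Set.Icc (0:ℝ) T)).pow 2).div_const 2).fun_sub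
          ((hasDerivWithinAt_id t (Set.Icc (0:ℝ) T)).const_mul (2 * ε))
      have heq : 2 * x t ^ (2-1) * (ξ t / x t) - (2 * t ^ (2-1) / 2 - 2 * ε)
          = 2 * ξ t - (t - 2 * ε) := by
        field_simp
        ring
      rw [heq] at hd
      exact (hd.mono hIoo).mono (by rw [hint])
    · intro t ht
      rw [hint] at ht
      have hlb := hξlb t (hIoo ht)
      linarith
  -- Step 3: conclude
  intro t ht
  have ht1 : tbar / 4 ≤ t := ht.1
  have ht2 : t ≤ tbar / 2 := ht.2
  have htI : t ∈ Set.Icc (0 : ℝ) T := ⟨by linarith, le_trans ht2 hT⟩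
  have h0 : (0 : ℝ) ∈ Set.Icc (0 : ℝ) T := ⟨le_refl _, le_of_lt hT0⟩
  have hmono := hf h0 htI (by linarith : (0:ℝ) ≤ t)
  simp only at hmono
  have hx0 : 0 < x 0 := hxpos 0 h0
  have hsq : x t ^ 2 ≥ t ^ 2 / 2 - 2 * ε * t := by nlinarith [sq_nonneg (x 0)]
  -- t²/2 - 2εt ≥ t·tbar/40 ≥ tbar²/160 > ε²
  have key : x t ^ 2 > ε ^ 2 := by nlinarith
  have hxt : 0 < x t := hxpos t htI
  nlinarith
end
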